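/- Define a_n = Σ_{π ∈ Π^B_n} u_{pos(π_0)} · ∏_{j=1}^{k} u_{pos(π_j)−1}·u_{pos(−π_j)} ∈ R, where for π ∈ Π^B_n with 0-block π_0 and block pairs {π_j, −π_j} (j = 1,…,k), from each pair π_j denotes the block whose element of minimal absolute value is positive, and pos(β) = |{i ∈ β : i > 0}|. Then a_0 = u_0 and a_{n+1} = D(a_n) + u_0^2 · a_n for all n ≥ 0. -/

import Mathlib

open Finset MvPolynomial

/-- The polynomial ring `ℚ[u₀, u₁, u₂, …]`; the variable `X l` represents `u_l`. -/
abbrev URing : Type := MvPolynomial ℕ ℚ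

/-- `pos β = |{i ∈ β : i > 0}|`, the number of positive elements of a block. -/
def posCount (β : Finset ℤ) : ℕ := (β.filter fun x => 0 < x).card

/-- The variable attached to a block `β` of a B-type partition: if the element of `β`
of minimal absolute value is positive (which happens exactly for the blocks `π_j`
representing the block pairs), the variable is `u_{pos(β)−1}`; otherwise (for the
0-block `π₀` and the blocks `−π_j`) it is `u_{pos(β)}`.  Hence the product of
`blockVar` over all blocks of `π` is `u_{pos(π₀)} ∏_j u_{pos(π_j)−1}·u_{pos(−π_j)}`. -/
noncomputable def blockVar (β : Finset ℤ) : URing :=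
  if ∃ m ∈ β, 0 < m ∧ ∀ x ∈ β, m ≤ |x| then X (posCount β - 1) else X (posCount β)

/-- A B-type partition of `{−n, …, n}`: a set partition `π` of `Finset.Icc (−n) n ⊆ ℤ`
such that `−β ∈ π` for every block `β ∈ π`, and exactly one block `π₀` satisfies
`π₀ = −π₀`. -/
def IsBPartition {n : ℕ} (π : Finpartition (Finset.Icc (-(n : ℤ)) n)) : Prop :=
  (∀ β ∈ π.parts, β.image (fun x => -x) ∈ π.parts) ∧
    (π.parts.filter fun β => β.image (fun x => -x) = β).card = 1

/-- `a_n = Σ_{π ∈ Π^B_n} u_{pos(π₀)} ∏_{j=1}^{k} u_{pos(π_j)−1}·u_{pos(−π_j)}`. -/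
noncomputable def aPoly (n : ℕ) : URing :=
  ∑ᶠ π : {π : Finpartition (Finset.Icc (-(n : ℤ)) n) // IsBPartition π},
    ∏ β ∈ π.val.parts, blockVar β

/-! ### mirror -/

def mirror (β : Finset ℤ) : Finset ℤ := β.image (fun x => -x)

@[simp] lemma mem_mirror {β : Finset ℤ} {x : ℤ} : x ∈ mirror β ↔ -x ∈ β := by
  simp only [mirror, mem_image]
  constructor
  · rintro ⟨y, hy, rfl⟩; simpa
  · intro h; exact ⟨-x, h, by ring⟩

@[simp] lemma mirror_mirror (β : Finset ℤ) : mirror (mirror β) = β := by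
  ext x; simp

lemma mirror_inj {β γ : Finset ℤ} (h : mirror β = mirror γ) : β = γ := by
  have := congrArg mirror h; simpa using this

@[simp] lemma mirror_empty : mirror ∅ = ∅ := rfl

@[simp] lemma mirror_singleton (x : ℤ) : mirror {x} = {-x} := by
  ext y; simp [neg_eq_iff_eq_neg]

lemma mirror_nonempty {β : Finset ℤ} (h : β.Nonempty) : (mirror β).Nonempty := by
  obtain ⟨x, hx⟩ := h; exact ⟨-x, by simp [hx]⟩

lemma mirror_insert (x : ℤ) (β : Finset ℤ) : mirror (insert x β) = insert (-x) (mirror β) := by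
  ext y; simp; constructor <;> rintro (h|h) <;> [skip;skip;skip;skip] <;> first | (left; omega) | (right; exact h)

/-! ### the ground set -/

lemma mem_Icc_int {n : ℕ} {x : ℤ} : x ∈ Finset.Icc (-(n : ℤ)) n ↔ |x| ≤ (n : ℤ) := by
  rw [Finset.mem_Icc, abs_le]

lemma t_not_mem {n : ℕ} : ((n : ℤ) + 1) ∉ Finset.Icc (-(n : ℤ)) n := by
  rw [Finset.mem_Icc]; omega

lemma mt_not_mem {n : ℕ} : (-((n : ℤ) + 1)) ∉ Finset.Icc (-(n : ℤ)) n := by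
  rw [Finset.mem_Icc]; omega

lemma zero_mem_Icc {n : ℕ} : (0 : ℤ) ∈ Finset.Icc (-(n : ℤ)) n := by
  rw [mem_Icc_int]; simp

lemma mem_Icc_succ {n : ℕ} {x : ℤ} :
    x ∈ Finset.Icc (-((n + 1 : ℕ) : ℤ)) ((n + 1 : ℕ) : ℤ) ↔
      x ∈ Finset.Icc (-(n : ℤ)) n ∨ x = (n : ℤ) + 1 ∨ x = -((n : ℤ) + 1) := by
  simp only [Finset.mem_Icc]; push_cast; omega

/-! ### predicate and index of blockVar -/

def hasPosMin (β : Finset ℤ) : Prop := ∃ m ∈ β, 0 < m ∧ ∀ x ∈ β, m ≤ |x|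

open Classical in
noncomputable def idx (β : Finset ℤ) : ℕ :=
  if hasPosMin β then posCount β - 1 else posCount β

lemma blockVar_eq_idx (β : Finset ℤ) : blockVar β = X (idx β) := by
  unfold blockVar idx hasPosMin
  split_ifs with h h' h' <;> first | rfl | (exact absurd h h') | (exact absurd h' h)

lemma idx_of_hasPosMin {β : Finset ℤ} (h : hasPosMin β) : idx β = posCount β - 1 := by
  unfold idx; rw [if_pos h]

lemma idx_of_not_hasPosMin {β : Finset ℤ} (h : ¬ hasPosMin β) : idx β = posCount β := by
  unfold idx; rw [if_neg h]

lemma not_hasPosMin_of_zero_mem {β : Finset ℤ} (h : 0 ∈ β) : ¬ hasPosMin β := by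
  rintro ⟨m, hm, hm0, hall⟩
  have := hall 0 h
  simp at this; omega

lemma posCount_pos_of_hasPosMin {β : Finset ℤ} (h : hasPosMin β) : 0 < posCount β := by
  obtain ⟨m, hm, hm0, -⟩ := h
  exact Finset.card_pos.2 ⟨m, Finset.mem_filter.2 ⟨hm, hm0⟩⟩

lemma posCount_insert_t {n : ℕ} {β : Finset ℤ} (h : ((n : ℤ) + 1) ∉ β) :
    posCount (insert ((n : ℤ) + 1) β) = posCount β + 1 := by
  unfold posCount
  rw [Finset.filter_insert, if_pos (by positivity)]
  exact Finset.card_insert_of_notMem (fun hx => h (Finset.mem_of_mem_filter _ hx))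

lemma posCount_insert_mt {n : ℕ} {β : Finset ℤ} :
    posCount (insert (-((n : ℤ) + 1)) β) = posCount β := by
  unfold posCount
  rw [Finset.filter_insert, if_neg (by omega)]

lemma hasPosMin_insert_mt {n : ℕ} {β : Finset ℤ} (h : ∀ x ∈ β, |x| ≤ (n : ℤ) + 1) :
    hasPosMin (insert (-((n : ℤ) + 1)) β) ↔ hasPosMin β := by
  constructor
  · rintro ⟨m, hm, hm0, hall⟩
    rcases Finset.mem_insert.1 hm with rfl | hm'
    · omega
    · exact ⟨m, hm', hm0, fun x hx => hall x (Finset.mem_insert_of_mem hx)⟩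
  · rintro ⟨m, hm, hm0, hall⟩
    refine ⟨m, Finset.mem_insert_of_mem hm, hm0, fun x hx => ?_⟩
    rcases Finset.mem_insert.1 hx with rfl | hx'
    · have h1 := h m hm
      have h2 := le_abs_self m
      rw [abs_neg, abs_of_pos (by positivity : (0:ℤ) < (n:ℤ)+1)]
      omega
    · exact hall x hx'

lemma hasPosMin_insert_t {n : ℕ} {β : Finset ℤ} (hne : β.Nonempty)
    (h : ∀ x ∈ β, |x| ≤ (n : ℤ)) :
    hasPosMin (insert ((n : ℤ) + 1) β) ↔ hasPosMin β := by
  constructor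
  · rintro ⟨m, hm, hm0, hall⟩
    rcases Finset.mem_insert.1 hm with rfl | hm'
    · obtain ⟨y, hy⟩ := hne
      have h1 := hall y (Finset.mem_insert_of_mem hy)
      have h2 := h y hy
      omega
    · exact ⟨m, hm', hm0, fun x hx => hall x (Finset.mem_insert_of_mem hx)⟩
  · rintro ⟨m, hm, hm0, hall⟩
    refine ⟨m, Finset.mem_insert_of_mem hm, hm0, fun x hx => ?_⟩
    rcases Finset.mem_insert.1 hx with rfl | hx'
    · have h1 := h m hm
      have h2 := le_abs_self m
      rw [abs_of_pos (by positivity : (0:ℤ) < (n:ℤ)+1)]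
      omega
    · exact hall x hx'

/-! ### the insertion map on blocks -/

def gIns (n : ℕ) (β γ : Finset ℤ) : Finset ℤ :=
  (if mirror γ = β then insert (-((n : ℤ) + 1)) else id)
    ((if γ = β then insert ((n : ℤ) + 1) else id) γ)

lemma mem_gIns {n : ℕ} {β γ x} :
    x ∈ gIns n β γ ↔ x ∈ γ ∨ (γ = β ∧ x = (n : ℤ) + 1) ∨ (mirror γ = β ∧ x = -((n : ℤ) + 1)) := by
  unfold gIns
  split_ifs with h1 h2 h2 <;> simp only [Finset.mem_insert, id_eq] <;> tauto

lemma gIns_of_ne {n : ℕ} {β γ : Finset ℤ} (h1 : γ ≠ β) (h2 : mirror γ ≠ β) :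
    gIns n β γ = γ := by
  unfold gIns; rw [if_neg h1, if_neg h2]; rfl

lemma subset_gIns {n : ℕ} {β γ : Finset ℤ} : γ ⊆ gIns n β γ :=
  fun x hx => mem_gIns.2 (Or.inl hx)

lemma gIns_filter {n : ℕ} {β γ : Finset ℤ} (h : γ ⊆ Finset.Icc (-(n : ℤ)) n) :
    (gIns n β γ).filter (· ∈ Finset.Icc (-(n : ℤ)) n) = γ := by
  ext x
  simp only [Finset.mem_filter, mem_gIns]
  constructor
  · rintro ⟨(hx | ⟨-, rfl⟩ | ⟨-, rfl⟩), hmem⟩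
    · exact hx
    · exact absurd hmem t_not_mem
    · exact absurd hmem mt_not_mem
  · intro hx; exact ⟨Or.inl hx, h hx⟩

lemma mirror_gIns {n : ℕ} {β γ : Finset ℤ} :
    mirror (gIns n β γ) = gIns n β (mirror γ) := by
  ext x
  simp only [mem_mirror, mem_gIns, mirror_mirror]
  constructor
  · rintro (h | ⟨h1, h2⟩ | ⟨h1, h2⟩)
    · exact Or.inl h
    · exact Or.inr (Or.inr ⟨h1, by omega⟩)
    · exact Or.inr (Or.inl ⟨h1, by omega⟩)
  · rintro (h | ⟨h1, h2⟩ | ⟨h1, h2⟩)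
    · exact Or.inl h
    · exact Or.inr (Or.inr ⟨h1, by omega⟩)
    · exact Or.inr (Or.inl ⟨h1, by omega⟩)

/-! ### basic facts about B-partitions -/

section BasicB
variable {n : ℕ} {π : Finpartition (Finset.Icc (-(n : ℤ)) n)} {β γ : Finset ℤ}

lemma mirror_mem (hB : IsBPartition π) (hβ : β ∈ π.parts) : mirror β ∈ π.parts :=
  hB.1 β hβ

lemma symm_unique (hB : IsBPartition π) (hβ : β ∈ π.parts) (hγ : γ ∈ π.parts)
    (hsβ : mirror β = β) (hsγ : mirror γ = γ) : β = γ := by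
  obtain ⟨a, ha⟩ := Finset.card_eq_one.1 hB.2
  have h1 : β ∈ π.parts.filter fun β => β.image (fun x => -x) = β :=
    Finset.mem_filter.2 ⟨hβ, hsβ⟩
  have h2 : γ ∈ π.parts.filter fun β => β.image (fun x => -x) = β :=
    Finset.mem_filter.2 ⟨hγ, hsγ⟩
  rw [ha, Finset.mem_singleton] at h1 h2
  rw [h1, h2]

lemma zero_mem_of_symm (hB : IsBPartition π) (hβ : β ∈ π.parts) (hs : mirror β = β) :
    (0 : ℤ) ∈ β := by
  obtain ⟨γ, hγ, h0⟩ := π.exists_mem (zero_mem_Icc (n := n))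
  have h0' : (0 : ℤ) ∈ mirror γ := by rw [mem_mirror]; simpa using h0
  have hsγ : mirror γ = γ := π.eq_of_mem_parts (mirror_mem hB hγ) hγ h0' h0
  rw [symm_unique hB hβ hγ hs hsγ]; exact h0

lemma gIns_injOn (hγ : γ ∈ π.parts) {δ : Finset ℤ} (hδ : δ ∈ π.parts)
    (h : gIns n β γ = gIns n β δ) : γ = δ := by
  have h2 := congrArg (Finset.filter (· ∈ Finset.Icc (-(n : ℤ)) n)) h
  rwa [gIns_filter (π.le hγ), gIns_filter (π.le hδ)] at h2

end BasicB

/-! ### the two partition constructions -/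

section Constructions
variable {n : ℕ} (π : Finpartition (Finset.Icc (-(n : ℤ)) n))

/-- Inserting `n+1` into block `β` and `-(n+1)` into `mirror β`. -/
def insPartition (hB : IsBPartition π) {β : Finset ℤ} (hβ : β ∈ π.parts) :
    Finpartition (Finset.Icc (-((n + 1 : ℕ) : ℤ)) ((n + 1 : ℕ) : ℤ)) where
  parts := π.parts.image (gIns n β)
  supIndep := by
    rw [Finset.supIndep_iff_pairwiseDisjoint]
    rintro a ha b hb hab
    simp only [Finset.coe_image, Set.mem_image, Finset.mem_coe] at ha hb
    obtain ⟨γ, hγ, rfl⟩ := ha; obtain ⟨δ, hδ, rfl⟩ := hb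
    have hγδ : γ ≠ δ := fun h => hab (by rw [h])
    have hsub1 := π.le hγ; have hsub2 := π.le hδ
    have hd : Disjoint γ δ := π.disjoint hγ hδ hγδ
    simp only [Function.onFun, id_eq]
    rw [Finset.disjoint_left]
    intro x hx1 hx2
    rw [mem_gIns] at hx1 hx2
    rcases hx1 with h1 | ⟨e1, rfl⟩ | ⟨e1, rfl⟩
    · rcases hx2 with h2 | ⟨e2, h2⟩ | ⟨e2, h2⟩
      · exact Finset.disjoint_left.1 hd h1 h2
      · exact t_not_mem (hsub1 (h2 ▸ h1))
      · exact mt_not_mem (hsub1 (h2 ▸ h1))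
    · rcases hx2 with h2 | ⟨e2, h2⟩ | ⟨e2, h2⟩
      · exact t_not_mem (hsub2 h2)
      · exact hγδ (e1.trans e2.symm)
      · omega
    · rcases hx2 with h2 | ⟨e2, h2⟩ | ⟨e2, h2⟩
      · exact mt_not_mem (hsub2 h2)
      · omega
      · exact hγδ (mirror_inj (e1.trans e2.symm))
  sup_parts := by
    ext x
    rw [Finset.sup_image]
    simp only [Finset.mem_sup, Function.comp, id_eq]
    constructor
    · rintro ⟨γ, hγ, hx⟩
      rw [mem_gIns] at hx
      rcases hx with h | ⟨-, rfl⟩ | ⟨-, rfl⟩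
      · exact mem_Icc_succ.2 (Or.inl (π.le hγ h))
      · exact mem_Icc_succ.2 (Or.inr (Or.inl rfl))
      · exact mem_Icc_succ.2 (Or.inr (Or.inr rfl))
    · intro hx
      rcases mem_Icc_succ.1 hx with h | rfl | rfl
      · obtain ⟨γ, hγ, hxγ⟩ := π.exists_mem h
        exact ⟨γ, hγ, subset_gIns hxγ⟩
      · exact ⟨β, hβ, mem_gIns.2 (Or.inr (Or.inl ⟨rfl, rfl⟩))⟩
      · exact ⟨mirror β, mirror_mem hB hβ, mem_gIns.2 (Or.inr (Or.inr ⟨mirror_mirror β, rfl⟩))⟩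
  bot_notMem := by
    intro h
    simp only [Finset.bot_eq_empty, Finset.mem_image] at h
    obtain ⟨γ, hγ, hg⟩ := h
    obtain ⟨y, hy⟩ := π.nonempty_of_mem_parts hγ
    have : y ∈ (∅ : Finset ℤ) := hg ▸ subset_gIns hy
    simp at this

/-- Adding `{n+1}` and `{-(n+1)}` as new singleton blocks. -/
def newPartition : Finpartition (Finset.Icc (-((n + 1 : ℕ) : ℤ)) ((n + 1 : ℕ) : ℤ)) where
  parts := insert {((n : ℤ) + 1)} (insert {(-((n : ℤ) + 1))} π.parts)
  supIndep := by
    rw [Finset.supIndep_iff_pairwiseDisjoint]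
    rintro a ha b hb hab
    simp only [Finset.coe_insert, Set.mem_insert_iff, Finset.mem_coe] at ha hb
    simp only [Function.onFun, id_eq]
    rw [Finset.disjoint_left]
    intro x hx1 hx2
    rcases ha with rfl | rfl | ha <;> rcases hb with rfl | rfl | hb
    · exact hab rfl
    · simp only [Finset.mem_singleton] at hx1 hx2; omega
    · rw [Finset.mem_singleton] at hx1; exact t_not_mem (π.le hb (hx1 ▸ hx2))
    · simp only [Finset.mem_singleton] at hx1 hx2; omega
    · exact hab rfl
    · rw [Finset.mem_singleton] at hx1; exact mt_not_mem (π.le hb (hx1 ▸ hx2))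
    · rw [Finset.mem_singleton] at hx2; exact t_not_mem (π.le ha (hx2 ▸ hx1))
    · rw [Finset.mem_singleton] at hx2; exact mt_not_mem (π.le ha (hx2 ▸ hx1))
    · exact Finset.disjoint_left.1 (π.disjoint ha hb (fun h => hab (by rw [h]))) hx1 hx2
  sup_parts := by
    ext x
    simp only [Finset.sup_insert, Finset.mem_union, Finset.mem_sup, id_eq,
      Finset.mem_singleton, Finset.sup_eq_union]
    constructor
    · rintro (rfl | rfl | ⟨γ, hγ, hx⟩)
      · exact mem_Icc_succ.2 (Or.inr (Or.inl rfl))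
      · exact mem_Icc_succ.2 (Or.inr (Or.inr rfl))
      · exact mem_Icc_succ.2 (Or.inl (π.le hγ hx))
    · intro hx
      rcases mem_Icc_succ.1 hx with h | rfl | rfl
      · obtain ⟨γ, hγ, hxγ⟩ := π.exists_mem h
        exact Or.inr (Or.inr ⟨γ, hγ, hxγ⟩)
      · exact Or.inl rfl
      · exact Or.inr (Or.inl rfl)
  bot_notMem := by
    intro h
    simp only [Finset.bot_eq_empty, Finset.mem_insert] at h
    rcases h with h | h | h
    · exact absurd h.symm (Finset.singleton_ne_empty _)
    · exact absurd h.symm (Finset.singleton_ne_empty _)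
    · exact π.bot_notMem h

end Constructions

/-! ### the constructions are B-partitions -/

section ConsB
variable {n : ℕ} {π : Finpartition (Finset.Icc (-(n : ℤ)) n)} {β : Finset ℤ}

lemma insPartition_parts (hB : IsBPartition π) (hβ : β ∈ π.parts) :
    (insPartition π hB hβ).parts = π.parts.image (gIns n β) := rfl

lemma newPartition_parts :
    (newPartition π).parts
      = insert {((n : ℤ) + 1)} (insert {(-((n : ℤ) + 1))} π.parts) := rfl

lemma t_ne_mt {n : ℕ} : ({((n : ℤ) + 1)} : Finset ℤ) ≠ {(-((n : ℤ) + 1))} := by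
  intro h
  rw [Finset.singleton_inj] at h
  omega

lemma singleton_t_not_mem (π : Finpartition (Finset.Icc (-(n : ℤ)) n)) :
    ({((n : ℤ) + 1)} : Finset ℤ) ∉ π.parts := fun h =>
  t_not_mem (π.le h (Finset.mem_singleton_self _))

lemma singleton_mt_not_mem (π : Finpartition (Finset.Icc (-(n : ℤ)) n)) :
    ({(-((n : ℤ) + 1))} : Finset ℤ) ∉ π.parts := fun h =>
  mt_not_mem (π.le h (Finset.mem_singleton_self _))

lemma isB_insPartition (hB : IsBPartition π) (hβ : β ∈ π.parts) :
    IsBPartition (insPartition π hB hβ) := by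
  obtain ⟨a, ha⟩ := Finset.card_eq_one.1 hB.2
  have ha' : a ∈ π.parts.filter fun β => β.image (fun x => -x) = β := by
    rw [ha]; exact Finset.mem_singleton_self _
  obtain ⟨haP, haS⟩ := Finset.mem_filter.1 ha'
  have haS' : mirror a = a := haS
  constructor
  · intro δ hδ
    rw [insPartition_parts, Finset.mem_image] at hδ ⊢
    obtain ⟨γ, hγ, rfl⟩ := hδ
    exact ⟨mirror γ, mirror_mem hB hγ, (mirror_gIns).symm⟩
  · rw [Finset.card_eq_one]
    refine ⟨gIns n β a, ?_⟩
    ext δ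
    rw [Finset.mem_filter, insPartition_parts, Finset.mem_image, Finset.mem_singleton]
    constructor
    · rintro ⟨⟨γ, hγ, rfl⟩, hs⟩
      have hs' : mirror γ = γ := by
        have : gIns n β (mirror γ) = gIns n β γ := by rw [← mirror_gIns]; exact hs
        exact gIns_injOn (mirror_mem hB hγ) hγ this
      have : γ ∈ π.parts.filter fun β => β.image (fun x => -x) = β :=
        Finset.mem_filter.2 ⟨hγ, hs'⟩
      rw [ha, Finset.mem_singleton] at this
      rw [this]
    · rintro rfl
      refine ⟨⟨a, haP, rfl⟩, ?_⟩
      show mirror _ = _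
      rw [mirror_gIns, haS']

lemma isB_newPartition (hB : IsBPartition π) : IsBPartition (newPartition π) := by
  constructor
  · intro δ hδ
    rw [newPartition_parts, Finset.mem_insert, Finset.mem_insert] at hδ ⊢
    rcases hδ with rfl | rfl | hδ
    · right; left; show mirror _ = _; rw [mirror_singleton]
    · left; show mirror _ = _; rw [mirror_singleton, neg_neg]
    · right; right; exact mirror_mem hB hδ
  · rw [newPartition_parts, Finset.filter_insert, Finset.filter_insert,
      if_neg, if_neg]
    · exact hB.2
    · show ¬ mirror _ = _
      rw [mirror_singleton, neg_neg, Finset.singleton_inj]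
      omega
    · show ¬ mirror _ = _
      rw [mirror_singleton, Finset.singleton_inj]
      omega

/-! ### weights -/

lemma idx_gIns_self (hB : IsBPartition π) (hβ : β ∈ π.parts) :
    idx (gIns n β β) = idx β + 1 := by
  have htβ : ((n : ℤ) + 1) ∉ β := fun h => t_not_mem (π.le hβ h)
  by_cases hs : mirror β = β
  · have h0 : (0 : ℤ) ∈ β := zero_mem_of_symm hB hβ hs
    have hg : gIns n β β = insert (-((n : ℤ) + 1)) (insert ((n : ℤ) + 1) β) := by
      simp [gIns, hs]
    have h0' : (0 : ℤ) ∈ insert (-((n : ℤ) + 1)) (insert ((n : ℤ) + 1) β) := by simp [h0]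
    rw [hg, idx_of_not_hasPosMin (not_hasPosMin_of_zero_mem h0'),
      idx_of_not_hasPosMin (not_hasPosMin_of_zero_mem h0), posCount_insert_mt,
      posCount_insert_t htβ]
  · have hg : gIns n β β = insert ((n : ℤ) + 1) β := by simp [gIns, hs]
    rw [hg]
    have hne := π.nonempty_of_mem_parts hβ
    have habs : ∀ x ∈ β, |x| ≤ (n : ℤ) := fun x hx => mem_Icc_int.1 (π.le hβ hx)
    have hiff := hasPosMin_insert_t hne habs
    by_cases hp : hasPosMin β
    · rw [idx_of_hasPosMin (hiff.2 hp), idx_of_hasPosMin hp, posCount_insert_t htβ]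
      have := posCount_pos_of_hasPosMin hp
      omega
    · rw [idx_of_not_hasPosMin (fun h => hp (hiff.1 h)), idx_of_not_hasPosMin hp,
        posCount_insert_t htβ]

lemma blockVar_gIns_ne {γ : Finset ℤ} (hγ : γ ∈ π.parts) (hne : γ ≠ β) :
    blockVar (gIns n β γ) = blockVar γ := by
  by_cases hm : mirror γ = β
  · have hg : gIns n β γ = insert (-((n : ℤ) + 1)) γ := by simp [gIns, hm, hne]
    rw [hg, blockVar_eq_idx, blockVar_eq_idx]
    congr 1
    have habs : ∀ x ∈ γ, |x| ≤ (n : ℤ) + 1 := fun x hx =>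
      le_trans (mem_Icc_int.1 (π.le hγ hx)) (by omega)
    have hiff := hasPosMin_insert_mt habs
    by_cases hp : hasPosMin γ
    · rw [idx_of_hasPosMin (hiff.2 hp), idx_of_hasPosMin hp, posCount_insert_mt]
    · rw [idx_of_not_hasPosMin (fun h => hp (hiff.1 h)), idx_of_not_hasPosMin hp,
        posCount_insert_mt]
  · rw [gIns_of_ne hne hm]

lemma blockVar_singleton_t : blockVar ({((n : ℤ) + 1)} : Finset ℤ) = X 0 := by
  rw [blockVar_eq_idx]
  congr 1
  have hp : hasPosMin ({((n : ℤ) + 1)} : Finset ℤ) :=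
    ⟨(n : ℤ) + 1, Finset.mem_singleton_self _, by positivity,
      fun x hx => by rw [Finset.mem_singleton] at hx; subst hx; exact le_abs_self _⟩
  rw [idx_of_hasPosMin hp]
  have : posCount ({((n : ℤ) + 1)} : Finset ℤ) = 1 := by
    unfold posCount
    rw [Finset.filter_singleton, if_pos (by positivity)]
    rfl
  rw [this]

lemma blockVar_singleton_mt : blockVar ({(-((n : ℤ) + 1))} : Finset ℤ) = X 0 := by
  rw [blockVar_eq_idx]
  congr 1
  have hp : ¬ hasPosMin ({(-((n : ℤ) + 1))} : Finset ℤ) := by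
    rintro ⟨m, hm, hm0, -⟩
    rw [Finset.mem_singleton] at hm
    omega
  rw [idx_of_not_hasPosMin hp]
  unfold posCount
  rw [Finset.filter_singleton, if_neg (by omega)]
  rfl

lemma weight_insPartition (hB : IsBPartition π) (hβ : β ∈ π.parts) :
    ∏ δ ∈ (insPartition π hB hβ).parts, blockVar δ
      = (∏ γ ∈ π.parts.erase β, blockVar γ) * X (idx β + 1) := by
  rw [insPartition_parts, Finset.prod_image (fun γ hγ δ hδ h => gIns_injOn hγ hδ h),
    ← Finset.mul_prod_erase π.parts _ hβ, mul_comm]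
  congr 1
  · apply Finset.prod_congr rfl
    intro γ hγ
    exact blockVar_gIns_ne (Finset.mem_of_mem_erase hγ) (Finset.ne_of_mem_erase hγ)
  · rw [blockVar_eq_idx, idx_gIns_self hB hβ]

lemma weight_newPartition :
    ∏ δ ∈ (newPartition π).parts, blockVar δ
      = X 0 ^ 2 * ∏ γ ∈ π.parts, blockVar γ := by
  rw [newPartition_parts, Finset.prod_insert, Finset.prod_insert,
    blockVar_singleton_t, blockVar_singleton_mt]
  · ring
  · exact singleton_mt_not_mem π
  · rw [Finset.mem_insert]
    rintro (h | h)
    · exact t_ne_mt h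
    · exact singleton_t_not_mem π h

end ConsB

/-! ### derivation of a finite product -/

lemma D_finset_prod (D : Derivation ℚ URing URing) {ι : Type*} [DecidableEq ι]
    (s : Finset ι) (f : ι → URing) :
    D (∏ i ∈ s, f i) = ∑ i ∈ s, (∏ j ∈ s.erase i, f j) * D (f i) := by
  induction s using Finset.induction_on with
  | empty => simp
  | @insert a s ha ih =>
    rw [Finset.prod_insert ha, D.leibniz, smul_eq_mul, smul_eq_mul, ih, Finset.mul_sum,
      Finset.sum_insert ha, Finset.erase_insert ha, add_comm]
    congr 1
    apply Finset.sum_congr rfl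
    intro i hi
    rw [Finset.erase_insert_of_ne (show a ≠ i by rintro rfl; exact ha hi),
      Finset.prod_insert (fun h => ha (Finset.mem_of_mem_erase h))]
    ring

/-! ### the global map and its injectivity -/

abbrev BP (n : ℕ) := {π : Finpartition (Finset.Icc (-(n : ℤ)) n) // IsBPartition π}

noncomputable def EMap (n : ℕ) :
    (Σ π : BP n, Option {β // β ∈ π.val.parts}) → BP (n + 1)
  | ⟨⟨π, hB⟩, none⟩ => ⟨newPartition π, isB_newPartition hB⟩
  | ⟨⟨π, hB⟩, some ⟨β, hβ⟩⟩ => ⟨insPartition π hB hβ, isB_insPartition hB hβ⟩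

noncomputable def remParts (n : ℕ) (P : Finset (Finset ℤ)) : Finset (Finset ℤ) :=
  (P.image (fun δ => δ.filter (· ∈ Finset.Icc (-(n : ℤ)) n))).erase ∅

lemma filter_singleton_t {n : ℕ} :
    ({((n : ℤ) + 1)} : Finset ℤ).filter (· ∈ Finset.Icc (-(n : ℤ)) n) = ∅ := by
  rw [Finset.filter_singleton, if_neg t_not_mem]

lemma filter_singleton_mt {n : ℕ} :
    ({(-((n : ℤ) + 1))} : Finset ℤ).filter (· ∈ Finset.Icc (-(n : ℤ)) n) = ∅ := by
  rw [Finset.filter_singleton, if_neg mt_not_mem]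

lemma filter_of_subset {n : ℕ} {γ : Finset ℤ} (h : γ ⊆ Finset.Icc (-(n : ℤ)) n) :
    γ.filter (· ∈ Finset.Icc (-(n : ℤ)) n) = γ :=
  Finset.filter_true_of_mem (fun x hx => h hx)

lemma remParts_new {n : ℕ} (π : Finpartition (Finset.Icc (-(n : ℤ)) n)) :
    remParts n (newPartition π).parts = π.parts := by
  ext δ
  rw [remParts, newPartition_parts, Finset.mem_erase, Finset.mem_image]
  constructor
  · rintro ⟨hne, ρ, hρ, rfl⟩
    rcases Finset.mem_insert.1 hρ with rfl | hρ'
    · exact absurd filter_singleton_t hne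
    rcases Finset.mem_insert.1 hρ' with rfl | hρ''
    · exact absurd filter_singleton_mt hne
    · rw [filter_of_subset (π.le hρ'')]; exact hρ''
  · intro hδ
    refine ⟨π.ne_bot hδ, δ, ?_, filter_of_subset (π.le hδ)⟩
    exact Finset.mem_insert_of_mem (Finset.mem_insert_of_mem hδ)

lemma remParts_ins {n : ℕ} {π : Finpartition (Finset.Icc (-(n : ℤ)) n)} {β : Finset ℤ}
    (hB : IsBPartition π) (hβ : β ∈ π.parts) :
    remParts n (insPartition π hB hβ).parts = π.parts := by
  ext δ
  rw [remParts, insPartition_parts, Finset.mem_erase, Finset.mem_image]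
  constructor
  · rintro ⟨hne, ρ, hρ, rfl⟩
    rw [Finset.mem_image] at hρ
    obtain ⟨γ, hγ, rfl⟩ := hρ
    rw [gIns_filter (π.le hγ)]; exact hγ
  · intro hδ
    exact ⟨π.ne_bot hδ, gIns n β δ, Finset.mem_image_of_mem _ hδ,
      gIns_filter (π.le hδ)⟩

lemma remParts_EMap {n : ℕ} (p : Σ π : BP n, Option {β // β ∈ π.val.parts}) :
    remParts n (EMap n p).val.parts = p.1.val.parts := by
  obtain ⟨⟨π, hB⟩, (_ | ⟨β, hβ⟩)⟩ := p
  · exact remParts_new π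
  · exact remParts_ins hB hβ

lemma t_mem_gIns_self {n : ℕ} (β : Finset ℤ) : ((n : ℤ) + 1) ∈ gIns n β β :=
  mem_gIns.2 (Or.inr (Or.inl ⟨rfl, rfl⟩))

lemma EMap_injective (n : ℕ) : Function.Injective (EMap n) := by
  rintro ⟨⟨π, hB⟩, c⟩ ⟨⟨π', hB'⟩, c'⟩ hEq
  have hparts : (EMap n ⟨⟨π, hB⟩, c⟩).val.parts = (EMap n ⟨⟨π', hB'⟩, c'⟩).val.parts := by
    rw [hEq]
  have hπ : π = π' := by
    apply Finpartition.ext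
    rw [← remParts_EMap ⟨⟨π, hB⟩, c⟩, ← remParts_EMap ⟨⟨π', hB'⟩, c'⟩, hparts]
  subst hπ
  have hcc : c = c' := by
    match c, c' with
    | none, none => rfl
    | none, some ⟨β', hβ'⟩ =>
      exfalso
      have h1 : ({((n : ℤ) + 1)} : Finset ℤ) ∈ (EMap n ⟨⟨π, hB⟩, none⟩).val.parts :=
        Finset.mem_insert_self _ _
      rw [hparts] at h1
      obtain ⟨γ, hγ, hg⟩ := Finset.mem_image.1 h1
      have hne := π.nonempty_of_mem_parts hγ
      obtain ⟨y, hy⟩ := hne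
      have hyt : y ∈ ({((n : ℤ) + 1)} : Finset ℤ) := hg ▸ subset_gIns hy
      rw [Finset.mem_singleton] at hyt
      exact t_not_mem (π.le hγ (hyt ▸ hy))
    | some ⟨β, hβ⟩, none =>
      exfalso
      have h1 : ({((n : ℤ) + 1)} : Finset ℤ) ∈ (EMap n ⟨⟨π, hB'⟩, none⟩).val.parts :=
        Finset.mem_insert_self _ _
      rw [← hparts] at h1
      obtain ⟨γ, hγ, hg⟩ := Finset.mem_image.1 h1
      have hne := π.nonempty_of_mem_parts hγ
      obtain ⟨y, hy⟩ := hne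
      have hyt : y ∈ ({((n : ℤ) + 1)} : Finset ℤ) := hg ▸ subset_gIns hy
      rw [Finset.mem_singleton] at hyt
      exact t_not_mem (π.le hγ (hyt ▸ hy))
    | some ⟨β, hβ⟩, some ⟨β', hβ'⟩ =>
      have h1 : gIns n β β ∈ (EMap n ⟨⟨π, hB⟩, some ⟨β, hβ⟩⟩).val.parts :=
        Finset.mem_image_of_mem _ hβ
      rw [hparts] at h1
      obtain ⟨γ, hγ, hg⟩ := Finset.mem_image.1 h1
      have ht : ((n : ℤ) + 1) ∈ gIns n β' γ := hg ▸ t_mem_gIns_self β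
      rw [mem_gIns] at ht
      have hγβ' : γ = β' := by
        rcases ht with h | ⟨h, -⟩ | ⟨-, h⟩
        · exact absurd (π.le hγ h) t_not_mem
        · exact h
        · omega
      subst hγβ'
      have h2 := congrArg (Finset.filter (· ∈ Finset.Icc (-(n : ℤ)) n)) hg
      rw [gIns_filter (π.le hγ), gIns_filter (π.le hβ)] at h2
      subst h2
      rfl
  subst hcc
  rfl

/-! ### surjectivity: helpers -/

lemma mirror_subset {β γ : Finset ℤ} (h : β ⊆ γ) : mirror β ⊆ mirror γ :=
  fun x hx => mem_mirror.2 (h (mem_mirror.1 hx))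

lemma mirror_subset_Icc {n : ℕ} {β : Finset ℤ} (h : β ⊆ Finset.Icc (-(n : ℤ)) n) :
    mirror β ⊆ Finset.Icc (-(n : ℤ)) n := by
  intro x hx
  rw [mem_Icc_int]
  have := mem_Icc_int.1 (h (mem_mirror.1 hx))
  rwa [abs_neg] at this

lemma mirror_filter {n : ℕ} (γ : Finset ℤ) :
    mirror (γ.filter (· ∈ Finset.Icc (-(n : ℤ)) n))
      = (mirror γ).filter (· ∈ Finset.Icc (-(n : ℤ)) n) := by
  ext x
  simp only [mem_mirror, Finset.mem_filter, mem_Icc_int, abs_neg]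

section Surj
variable {n : ℕ} {σ : Finpartition (Finset.Icc (-((n + 1 : ℕ) : ℤ)) ((n + 1 : ℕ) : ℤ))}

/-- Case A: removing the two singletons `{t}`, `{-t}`. -/
def remPartitionA (σ : Finpartition (Finset.Icc (-((n + 1 : ℕ) : ℤ)) ((n + 1 : ℕ) : ℤ)))
    (ht : ({((n : ℤ) + 1)} : Finset ℤ) ∈ σ.parts)
    (hmt : ({(-((n : ℤ) + 1))} : Finset ℤ) ∈ σ.parts) :
    Finpartition (Finset.Icc (-(n : ℤ)) n) where
  parts := (σ.parts.erase {((n : ℤ) + 1)}).erase {(-((n : ℤ) + 1))}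
  supIndep := σ.supIndep.subset
    (Finset.Subset.trans (Finset.erase_subset _ _) (Finset.erase_subset _ _))
  sup_parts := by
    ext x
    rw [Finset.mem_sup]
    constructor
    · rintro ⟨γ, hγ, hx⟩
      rw [Finset.mem_erase, Finset.mem_erase] at hγ
      obtain ⟨h1, h2, h3⟩ := hγ
      rcases mem_Icc_succ.1 (σ.le h3 hx) with h | rfl | rfl
      · exact h
      · exact absurd (σ.eq_of_mem_parts h3 ht hx (Finset.mem_singleton_self _)) h2
      · exact absurd (σ.eq_of_mem_parts h3 hmt hx (Finset.mem_singleton_self _)) h1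
    · intro hx
      obtain ⟨ρ, hρ, hxρ⟩ := σ.exists_mem (mem_Icc_succ.2 (Or.inl hx))
      refine ⟨ρ, ?_, hxρ⟩
      rw [Finset.mem_erase, Finset.mem_erase]
      refine ⟨?_, ?_, hρ⟩
      · rintro rfl
        rw [Finset.mem_singleton] at hxρ
        exact mt_not_mem (hxρ ▸ hx)
      · rintro rfl
        rw [Finset.mem_singleton] at hxρ
        exact t_not_mem (hxρ ▸ hx)
  bot_notMem := fun h =>
    σ.bot_notMem (Finset.mem_of_mem_erase (Finset.mem_of_mem_erase h))

lemma isB_remPartitionA (hBσ : IsBPartition σ)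
    (ht : ({((n : ℤ) + 1)} : Finset ℤ) ∈ σ.parts)
    (hmt : ({(-((n : ℤ) + 1))} : Finset ℤ) ∈ σ.parts) :
    IsBPartition (remPartitionA σ ht hmt) := by
  have hparts : (remPartitionA σ ht hmt).parts
      = (σ.parts.erase {((n : ℤ) + 1)}).erase {(-((n : ℤ) + 1))} := rfl
  constructor
  · intro γ hγ
    rw [hparts, Finset.mem_erase, Finset.mem_erase] at hγ ⊢
    obtain ⟨h1, h2, h3⟩ := hγ
    refine ⟨?_, ?_, mirror_mem hBσ h3⟩
    · intro h
      apply h2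
      have h' : mirror γ = {(-((n : ℤ) + 1))} := h
      have := congrArg mirror h'
      rwa [mirror_mirror, mirror_singleton, neg_neg] at this
    · intro h
      apply h1
      have h' : mirror γ = {((n : ℤ) + 1)} := h
      have := congrArg mirror h'
      rwa [mirror_mirror, mirror_singleton] at this
  · rw [hparts]
    have : ((σ.parts.erase {((n : ℤ) + 1)}).erase {(-((n : ℤ) + 1))}).filter
        (fun β => β.image (fun x => -x) = β) = σ.parts.filter (fun β => β.image (fun x => -x) = β) := by
      ext γ
      rw [Finset.mem_filter, Finset.mem_filter, Finset.mem_erase, Finset.mem_erase]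
      constructor
      · rintro ⟨⟨-, -, h3⟩, hs⟩
        exact ⟨h3, hs⟩
      · rintro ⟨h3, hs⟩
        have hs' : mirror γ = γ := hs
        refine ⟨⟨?_, ?_, h3⟩, hs⟩
        · rintro rfl
          rw [mirror_singleton, neg_neg] at hs'
          rw [Finset.singleton_inj] at hs'
          omega
        · rintro rfl
          rw [mirror_singleton] at hs'
          rw [Finset.singleton_inj] at hs'
          omega
    rw [this]
    exact hBσ.2

lemma EMap_remPartitionA (hBσ : IsBPartition σ)
    (ht : ({((n : ℤ) + 1)} : Finset ℤ) ∈ σ.parts)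
    (hmt : ({(-((n : ℤ) + 1))} : Finset ℤ) ∈ σ.parts) :
    (newPartition (remPartitionA σ ht hmt)).parts = σ.parts := by
  rw [newPartition_parts]
  ext γ
  rw [Finset.mem_insert, Finset.mem_insert]
  constructor
  · rintro (rfl | rfl | hγ)
    · exact ht
    · exact hmt
    · exact Finset.mem_of_mem_erase (Finset.mem_of_mem_erase hγ)
  · intro hγ
    by_cases h1 : γ = {((n : ℤ) + 1)}
    · exact Or.inl h1
    by_cases h2 : γ = {(-((n : ℤ) + 1))}
    · exact Or.inr (Or.inl h2)
    · exact Or.inr (Or.inr (Finset.mem_erase.2 ⟨h2, Finset.mem_erase.2 ⟨h1, hγ⟩⟩))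

end Surj

/-! ### surjectivity: case B -/

noncomputable def coreB (n : ℕ) (δ : Finset ℤ) : Finset ℤ := δ.filter (· ∈ Finset.Icc (-(n : ℤ)) n)

lemma coreB_subset {n : ℕ} {δ : Finset ℤ} : coreB n δ ⊆ δ := Finset.filter_subset _ _

lemma coreB_subset_Icc {n : ℕ} {δ : Finset ℤ} : coreB n δ ⊆ Finset.Icc (-(n : ℤ)) n :=
  fun _ hx => (Finset.mem_filter.1 hx).2

lemma mem_coreB {n : ℕ} {δ : Finset ℤ} {x : ℤ} :
    x ∈ coreB n δ ↔ x ∈ δ ∧ x ∈ Finset.Icc (-(n : ℤ)) n := Finset.mem_filter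

lemma mirror_coreB {n : ℕ} (δ : Finset ℤ) : mirror (coreB n δ) = coreB n (mirror δ) :=
  mirror_filter δ

section SurjB
variable {n : ℕ} {σ : Finpartition (Finset.Icc (-((n + 1 : ℕ) : ℤ)) ((n + 1 : ℕ) : ℤ))}
  {δt : Finset ℤ}

lemma mt_mem_mirror_B (htδ : ((n : ℤ) + 1) ∈ δt) : (-((n : ℤ) + 1)) ∈ mirror δt := by
  rw [mem_mirror, neg_neg]; exact htδ

lemma LB1 (hBσ : IsBPartition σ) (hδt : δt ∈ σ.parts) (htδ : ((n : ℤ) + 1) ∈ δt)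
    (hA : δt ≠ {((n : ℤ) + 1)}) : (coreB n δt).Nonempty := by
  by_cases hmt : (-((n : ℤ) + 1)) ∈ δt
  · have hsymm : mirror δt = δt :=
      σ.eq_of_mem_parts (mirror_mem hBσ hδt) hδt (by rw [mem_mirror]; simpa using hmt) htδ
    have h0 : (0 : ℤ) ∈ δt := zero_mem_of_symm hBσ hδt hsymm
    exact ⟨0, mem_coreB.2 ⟨h0, zero_mem_Icc⟩⟩
  · have hy : ∃ y ∈ δt, y ≠ ((n : ℤ) + 1) := by
      by_contra h
      push_neg at h
      exact hA (Finset.eq_singleton_iff_unique_mem.2 ⟨htδ, h⟩)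
    obtain ⟨y, hyδ, hyne⟩ := hy
    rcases mem_Icc_succ.1 (σ.le hδt hyδ) with h | h | h
    · exact ⟨y, mem_coreB.2 ⟨hyδ, h⟩⟩
    · exact absurd h hyne
    · exact absurd (h ▸ hyδ) hmt

lemma LB0a (hBσ : IsBPartition σ) (hδt : δt ∈ σ.parts) (htδ : ((n : ℤ) + 1) ∈ δt)
    (hmt : (-((n : ℤ) + 1)) ∈ δt) :
    mirror δt = δt ∧ mirror (coreB n δt) = coreB n δt := by
  have hsymm : mirror δt = δt :=
    σ.eq_of_mem_parts (mirror_mem hBσ hδt) hδt (by rw [mem_mirror]; simpa using hmt) htδ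
  exact ⟨hsymm, by rw [mirror_coreB, hsymm]⟩

lemma LB0b (hBσ : IsBPartition σ) (hδt : δt ∈ σ.parts) (htδ : ((n : ℤ) + 1) ∈ δt)
    (hA : δt ≠ {((n : ℤ) + 1)}) (hmt : (-((n : ℤ) + 1)) ∉ δt) :
    mirror (coreB n δt) ≠ coreB n δt ∧ δt = insert ((n : ℤ) + 1) (coreB n δt) := by
  have hins : δt = insert ((n : ℤ) + 1) (coreB n δt) := by
    ext x
    rw [Finset.mem_insert, mem_coreB]
    constructor
    · intro hx
      rcases mem_Icc_succ.1 (σ.le hδt hx) with h | h | h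
      · exact Or.inr ⟨hx, h⟩
      · exact Or.inl h
      · exact absurd (h ▸ hx) hmt
    · rintro (rfl | ⟨hx, -⟩)
      · exact htδ
      · exact hx
  refine ⟨?_, hins⟩
  intro h
  obtain ⟨y, hy⟩ := LB1 hBσ hδt htδ hA
  have hyδ : y ∈ δt := coreB_subset hy
  have hym : y ∈ mirror δt := mirror_subset coreB_subset (h ▸ hy)
  have hsymm : mirror δt = δt := σ.eq_of_mem_parts (mirror_mem hBσ hδt) hδt hym hyδ
  exact hmt (hsymm ▸ mt_mem_mirror_B htδ)

lemma LB2 (hBσ : IsBPartition σ) (hδt : δt ∈ σ.parts) (htδ : ((n : ℤ) + 1) ∈ δt)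
    (hA : δt ≠ {((n : ℤ) + 1)}) : gIns n (coreB n δt) (coreB n δt) = δt := by
  by_cases hmt : (-((n : ℤ) + 1)) ∈ δt
  · obtain ⟨hsymm, hbs⟩ := LB0a hBσ hδt htδ hmt
    have hg : gIns n (coreB n δt) (coreB n δt)
        = insert (-((n : ℤ) + 1)) (insert ((n : ℤ) + 1) (coreB n δt)) := by
      simp [gIns, hbs]
    rw [hg]
    ext x
    rw [Finset.mem_insert, Finset.mem_insert, mem_coreB]
    constructor
    · rintro (rfl | rfl | ⟨hx, -⟩)
      · exact hmt
      · exact htδ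
      · exact hx
    · intro hx
      rcases mem_Icc_succ.1 (σ.le hδt hx) with h | h | h
      · exact Or.inr (Or.inr ⟨hx, h⟩)
      · exact Or.inr (Or.inl h)
      · exact Or.inl h
  · obtain ⟨hbs, hins⟩ := LB0b hBσ hδt htδ hA hmt
    have hg : gIns n (coreB n δt) (coreB n δt) = insert ((n : ℤ) + 1) (coreB n δt) := by
      unfold gIns
      rw [if_neg hbs, id_eq, if_pos rfl]
    rw [hg, ← hins]

lemma LB3 (hBσ : IsBPartition σ) (hδt : δt ∈ σ.parts) (htδ : ((n : ℤ) + 1) ∈ δt)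
    (hA : δt ≠ {((n : ℤ) + 1)}) :
    gIns n (coreB n δt) (mirror (coreB n δt)) = mirror δt := by
  by_cases hmt : (-((n : ℤ) + 1)) ∈ δt
  · obtain ⟨hsymm, hbs⟩ := LB0a hBσ hδt htδ hmt
    rw [hbs, LB2 hBσ hδt htδ hA, hsymm]
  · obtain ⟨hbs, hins⟩ := LB0b hBσ hδt htδ hA hmt
    have hg : gIns n (coreB n δt) (mirror (coreB n δt))
        = insert (-((n : ℤ) + 1)) (mirror (coreB n δt)) := by
      unfold gIns
      rw [if_neg hbs, id_eq, if_pos (mirror_mirror _)]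
    rw [hg]
    conv_rhs => rw [hins, mirror_insert]

lemma LB4 (hBσ : IsBPartition σ) (hδt : δt ∈ σ.parts) (htδ : ((n : ℤ) + 1) ∈ δt)
    (hA : δt ≠ {((n : ℤ) + 1)}) {γ : Finset ℤ} (hγ : γ ∈ σ.parts) (h1 : γ ≠ δt)
    (h2 : γ ≠ mirror δt) : gIns n (coreB n δt) γ = γ := by
  obtain ⟨y, hy⟩ := LB1 hBσ hδt htδ hA
  apply gIns_of_ne
  · intro h
    exact h1 (σ.eq_of_mem_parts hγ hδt (h ▸ hy) (coreB_subset hy))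
  · intro h
    have : mirror γ = δt :=
      σ.eq_of_mem_parts (mirror_mem hBσ hγ) hδt (h ▸ hy) (coreB_subset hy)
    apply h2
    rw [← this, mirror_mirror]

lemma LB5 (hδt : δt ∈ σ.parts) (htδ : ((n : ℤ) + 1) ∈ δt)
    {γ : Finset ℤ} (hγ : γ ∈ σ.parts) (h1 : γ ≠ δt) (h2 : γ ≠ mirror δt)
    (hBσ : IsBPartition σ) : γ ⊆ Finset.Icc (-(n : ℤ)) n := by
  intro x hx
  rcases mem_Icc_succ.1 (σ.le hγ hx) with h | rfl | rfl
  · exact h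
  · exact absurd (σ.eq_of_mem_parts hγ hδt hx htδ) h1
  · exact absurd (σ.eq_of_mem_parts hγ (mirror_mem hBσ hδt) hx (mt_mem_mirror_B htδ)) h2

/-- Case B: removing `n+1` and `-(n+1)` from their (non-singleton) blocks. -/
noncomputable def remPartitionB (σ : Finpartition (Finset.Icc (-((n + 1 : ℕ) : ℤ)) ((n + 1 : ℕ) : ℤ)))
    (hBσ : IsBPartition σ) (hδt : δt ∈ σ.parts) (htδ : ((n : ℤ) + 1) ∈ δt)
    (hA : δt ≠ {((n : ℤ) + 1)}) : Finpartition (Finset.Icc (-(n : ℤ)) n) where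
  parts := insert (coreB n δt)
    (insert (mirror (coreB n δt)) ((σ.parts.erase δt).erase (mirror δt)))
  supIndep := by
    rw [Finset.supIndep_iff_pairwiseDisjoint]
    rintro a ha b hb hab
    simp only [Finset.coe_insert, Set.mem_insert_iff, Finset.mem_coe, Finset.mem_erase] at ha hb
    simp only [Function.onFun, id_eq]
    have hdisj : ∀ γ, γ ∈ σ.parts → γ ≠ δt → γ ≠ mirror δt →
        Disjoint (coreB n δt) γ ∧ Disjoint (mirror (coreB n δt)) γ := by
      intro γ hγ h1 h2
      constructor
      · exact Disjoint.mono_left coreB_subset (σ.disjoint hδt hγ (fun h => h1 h.symm))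
      · exact Disjoint.mono_left (mirror_subset coreB_subset)
          (σ.disjoint (mirror_mem hBσ hδt) hγ (fun h => h2 h.symm))
    have hcore_mirror : coreB n δt ≠ mirror (coreB n δt) → Disjoint (coreB n δt) (mirror (coreB n δt)) := by
      intro hne
      have hδne : δt ≠ mirror δt := by
        intro h
        apply hne
        rw [mirror_coreB, ← h]
      exact Disjoint.mono coreB_subset (mirror_subset coreB_subset)
        (σ.disjoint hδt (mirror_mem hBσ hδt) hδne)
    rcases ha with rfl | rfl | ⟨ha1, ha2, ha3⟩ <;> rcases hb with rfl | rfl | ⟨hb1, hb2, hb3⟩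
    · exact absurd rfl hab
    · exact hcore_mirror hab
    · exact (hdisj _ hb3 hb2 hb1).1
    · exact (hcore_mirror (Ne.symm hab)).symm
    · exact absurd rfl hab
    · exact (hdisj _ hb3 hb2 hb1).2
    · exact ((hdisj _ ha3 ha2 ha1).1).symm
    · exact ((hdisj _ ha3 ha2 ha1).2).symm
    · exact σ.disjoint ha3 hb3 hab
  sup_parts := by
    ext x
    rw [Finset.mem_sup]
    constructor
    · rintro ⟨γ, hγ, hx⟩
      rcases Finset.mem_insert.1 hγ with rfl | hγ'
      · exact coreB_subset_Icc hx
      rcases Finset.mem_insert.1 hγ' with rfl | hγ''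
      · exact mirror_subset_Icc coreB_subset_Icc hx
      · have h'' := Finset.mem_erase.1 hγ''
        have h''' := Finset.mem_erase.1 h''.2
        exact LB5 hδt htδ h'''.2 h'''.1 h''.1 hBσ hx
    · intro hx
      obtain ⟨ρ, hρ, hxρ⟩ := σ.exists_mem (mem_Icc_succ.2 (Or.inl hx))
      by_cases h1 : ρ = δt
      · subst h1
        exact ⟨coreB n ρ, Finset.mem_insert_self _ _, mem_coreB.2 ⟨hxρ, hx⟩⟩
      by_cases h2 : ρ = mirror δt
      · subst h2
        refine ⟨mirror (coreB n δt), Finset.mem_insert_of_mem (Finset.mem_insert_self _ _), ?_⟩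
        rw [mirror_coreB]
        exact mem_coreB.2 ⟨hxρ, hx⟩
      · exact ⟨ρ, Finset.mem_insert_of_mem (Finset.mem_insert_of_mem
          (Finset.mem_erase.2 ⟨h2, Finset.mem_erase.2 ⟨h1, hρ⟩⟩)), hxρ⟩
  bot_notMem := by
    intro h
    rcases Finset.mem_insert.1 h with h' | h'
    · obtain ⟨y, hy⟩ := LB1 hBσ hδt htδ hA
      rw [← h'] at hy
      simp at hy
    rcases Finset.mem_insert.1 h' with h'' | h''
    · obtain ⟨y, hy⟩ := mirror_nonempty (LB1 hBσ hδt htδ hA)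
      rw [← h''] at hy
      simp at hy
    · exact σ.bot_notMem (Finset.mem_of_mem_erase (Finset.mem_of_mem_erase h''))

end SurjB

section SurjB2
variable {n : ℕ} {σ : Finpartition (Finset.Icc (-((n + 1 : ℕ) : ℤ)) ((n + 1 : ℕ) : ℤ))}
  {δt : Finset ℤ}

lemma remPartitionB_parts (hBσ : IsBPartition σ) (hδt : δt ∈ σ.parts)
    (htδ : ((n : ℤ) + 1) ∈ δt) (hA : δt ≠ {((n : ℤ) + 1)}) :
    (remPartitionB σ hBσ hδt htδ hA).parts = insert (coreB n δt)
      (insert (mirror (coreB n δt)) ((σ.parts.erase δt).erase (mirror δt))) := rfl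

lemma isB_remPartitionB (hBσ : IsBPartition σ) (hδt : δt ∈ σ.parts)
    (htδ : ((n : ℤ) + 1) ∈ δt) (hA : δt ≠ {((n : ℤ) + 1)}) :
    IsBPartition (remPartitionB σ hBσ hδt htδ hA) := by
  obtain ⟨a, ha⟩ := Finset.card_eq_one.1 hBσ.2
  have ha' : a ∈ σ.parts.filter fun β => β.image (fun x => -x) = β := by
    rw [ha]; exact Finset.mem_singleton_self _
  obtain ⟨haP, haS⟩ := Finset.mem_filter.1 ha'
  have haS' : mirror a = a := haS
  constructor
  · intro γ hγ
    rw [remPartitionB_parts] at hγ ⊢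
    show mirror γ ∈ _
    rcases Finset.mem_insert.1 hγ with rfl | hγ'
    · exact Finset.mem_insert_of_mem (Finset.mem_insert_self _ _)
    rcases Finset.mem_insert.1 hγ' with rfl | hγ''
    · rw [mirror_mirror]; exact Finset.mem_insert_self _ _
    · obtain ⟨h1, h2'⟩ := Finset.mem_erase.1 hγ''
      obtain ⟨h2, h3⟩ := Finset.mem_erase.1 h2'
      refine Finset.mem_insert_of_mem (Finset.mem_insert_of_mem (Finset.mem_erase.2
        ⟨?_, Finset.mem_erase.2 ⟨?_, mirror_mem hBσ h3⟩⟩))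
      · intro h
        exact h2 (mirror_inj h)
      · intro h
        apply h1
        rw [← mirror_mirror γ, h]
  · rw [Finset.card_eq_one, remPartitionB_parts]
    by_cases hsymm : mirror δt = δt
    · refine ⟨coreB n δt, ?_⟩
      have hcs : mirror (coreB n δt) = coreB n δt := by rw [mirror_coreB, hsymm]
      have haδ : a = δt := symm_unique hBσ haP hδt haS' hsymm
      ext γ
      rw [Finset.mem_filter, Finset.mem_singleton]
      constructor
      · rintro ⟨hγ, hs⟩
        have hs' : mirror γ = γ := hs
        rcases Finset.mem_insert.1 hγ with rfl | hγ'
        · rfl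
        rcases Finset.mem_insert.1 hγ' with rfl | hγ''
        · exact hcs
        · obtain ⟨h1, h2'⟩ := Finset.mem_erase.1 hγ''
          obtain ⟨h2, h3⟩ := Finset.mem_erase.1 h2'
          exact absurd (symm_unique hBσ h3 haP hs' haS') (haδ ▸ h2)
      · rintro rfl
        exact ⟨Finset.mem_insert_self _ _, hcs⟩
    · refine ⟨a, ?_⟩
      have hmt : (-((n : ℤ) + 1)) ∉ δt := fun hm => hsymm (LB0a hBσ hδt htδ hm).1
      have hcore_ns : mirror (coreB n δt) ≠ coreB n δt := (LB0b hBσ hδt htδ hA hmt).1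
      have haδ1 : a ≠ δt := by rintro rfl; exact hsymm haS'
      have haδ2 : a ≠ mirror δt := by
        rintro rfl
        exact hsymm (by rw [← haS', mirror_mirror])
      ext γ
      rw [Finset.mem_filter, Finset.mem_singleton]
      constructor
      · rintro ⟨hγ, hs⟩
        have hs' : mirror γ = γ := hs
        rcases Finset.mem_insert.1 hγ with rfl | hγ'
        · exact absurd hs' hcore_ns
        rcases Finset.mem_insert.1 hγ' with rfl | hγ''
        · rw [mirror_mirror] at hs'
          exact absurd hs'.symm hcore_ns
        · obtain ⟨h1, h2'⟩ := Finset.mem_erase.1 hγ''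
          obtain ⟨h2, h3⟩ := Finset.mem_erase.1 h2'
          exact symm_unique hBσ h3 haP hs' haS'
      · rintro rfl
        exact ⟨Finset.mem_insert_of_mem (Finset.mem_insert_of_mem (Finset.mem_erase.2
          ⟨haδ2, Finset.mem_erase.2 ⟨haδ1, haP⟩⟩)), haS⟩

lemma EMap_remPartitionB (hBσ : IsBPartition σ) (hδt : δt ∈ σ.parts)
    (htδ : ((n : ℤ) + 1) ∈ δt) (hA : δt ≠ {((n : ℤ) + 1)}) :
    (insPartition (remPartitionB σ hBσ hδt htδ hA) (isB_remPartitionB hBσ hδt htδ hA)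
      (Finset.mem_insert_self _ _)).parts = σ.parts := by
  show Finset.image (gIns n (coreB n δt)) (remPartitionB σ hBσ hδt htδ hA).parts = σ.parts
  ext δ
  rw [Finset.mem_image]
  constructor
  · rintro ⟨γ, hγ, rfl⟩
    rw [remPartitionB_parts] at hγ
    rcases Finset.mem_insert.1 hγ with rfl | hγ'
    · rw [LB2 hBσ hδt htδ hA]; exact hδt
    rcases Finset.mem_insert.1 hγ' with rfl | hγ''
    · rw [LB3 hBσ hδt htδ hA]; exact mirror_mem hBσ hδt
    · obtain ⟨h1, h2'⟩ := Finset.mem_erase.1 hγ''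
      obtain ⟨h2, h3⟩ := Finset.mem_erase.1 h2'
      rw [LB4 hBσ hδt htδ hA h3 h2 h1]; exact h3
  · intro hδ
    by_cases e1 : δ = δt
    · subst e1
      exact ⟨coreB n δ, Finset.mem_insert_self _ _, LB2 hBσ hδt htδ hA⟩
    by_cases e2 : δ = mirror δt
    · subst e2
      exact ⟨mirror (coreB n δt),
        Finset.mem_insert_of_mem (Finset.mem_insert_self _ _), LB3 hBσ hδt htδ hA⟩
    · exact ⟨δ, Finset.mem_insert_of_mem (Finset.mem_insert_of_mem (Finset.mem_erase.2
        ⟨e2, Finset.mem_erase.2 ⟨e1, hδ⟩⟩)), LB4 hBσ hδt htδ hA hδ e1 e2⟩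

end SurjB2

lemma EMap_surjective (n : ℕ) : Function.Surjective (EMap n) := by
  rintro ⟨σ, hBσ⟩
  obtain ⟨δt, hδt, htδ⟩ := σ.exists_mem (mem_Icc_succ.2 (Or.inr (Or.inl rfl)))
  by_cases hA : δt = {((n : ℤ) + 1)}
  · subst hA
    have ht : ({((n : ℤ) + 1)} : Finset ℤ) ∈ σ.parts := hδt
    have hmt : ({(-((n : ℤ) + 1))} : Finset ℤ) ∈ σ.parts := by
      have := mirror_mem hBσ hδt
      rwa [mirror_singleton] at this
    refine ⟨⟨⟨remPartitionA σ ht hmt, isB_remPartitionA hBσ ht hmt⟩, none⟩, ?_⟩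
    exact Subtype.ext (Finpartition.ext (EMap_remPartitionA hBσ ht hmt))
  · refine ⟨⟨⟨remPartitionB σ hBσ hδt htδ hA, isB_remPartitionB hBσ hδt htδ hA⟩,
      some ⟨coreB n δt, Finset.mem_insert_self _ _⟩⟩, ?_⟩
    exact Subtype.ext (Finpartition.ext (EMap_remPartitionB hBσ hδt htδ hA))

/-- `a_0 = u₀` and `a_{n+1} = D(a_n) + u₀² · a_n` for all `n ≥ 0`, where `D` is the
derivation with `D(u_l) = u_{l+1}`. -/
theorem aPoly_recurrence (D : Derivation ℚ URing URing)
    (hD : ∀ l : ℕ, D (X l) = X (l + 1)) :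
    aPoly 0 = X 0 ∧ ∀ n : ℕ, aPoly (n + 1) = D (aPoly n) + X 0 ^ 2 * aPoly n := by
  constructor
  · -- `aPoly 0 = X 0`
    have hS : Finset.Icc (-((0 : ℕ) : ℤ)) ((0 : ℕ) : ℤ) = {(0 : ℤ)} := by
      norm_num
    have hparts : ∀ π : Finpartition (Finset.Icc (-((0 : ℕ) : ℤ)) ((0 : ℕ) : ℤ)),
        π.parts = {({0} : Finset ℤ)} := by
      intro π
      ext γ
      rw [Finset.mem_singleton]
      constructor
      · intro hγ
        have hsub : γ ⊆ {(0 : ℤ)} := hS ▸ π.le hγ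
        rcases Finset.subset_singleton_iff.1 hsub with rfl | h
        · exact absurd rfl (π.ne_bot hγ)
        · exact h
      · rintro rfl
        obtain ⟨γ', hγ', h0⟩ := π.exists_mem (zero_mem_Icc (n := 0))
        have hsub : γ' ⊆ {(0 : ℤ)} := hS ▸ π.le hγ'
        rcases Finset.subset_singleton_iff.1 hsub with rfl | h
        · exact absurd h0 (Finset.notMem_empty _)
        · exact h ▸ hγ'
    have hne : Finset.Icc (-((0 : ℕ) : ℤ)) ((0 : ℕ) : ℤ) ≠ ⊥ := by
      rw [hS]; exact Finset.singleton_ne_empty _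
    have hB₀ : IsBPartition (Finpartition.indiscrete hne) := by
      constructor
      · intro β hβ
        rw [hparts, Finset.mem_singleton] at hβ ⊢
        subst hβ
        show mirror _ = _
        rw [mirror_singleton, neg_zero]
      · rw [hparts, Finset.filter_singleton, if_pos]
        · rfl
        · show mirror _ = _
          rw [mirror_singleton, neg_zero]
    haveI : Unique {π : Finpartition (Finset.Icc (-((0 : ℕ) : ℤ)) ((0 : ℕ) : ℤ)) //
        IsBPartition π} := by
      refine ⟨⟨⟨Finpartition.indiscrete hne, hB₀⟩⟩, fun p => Subtype.ext (Finpartition.ext ?_)⟩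
      rw [hparts, hparts]
    rw [aPoly, finsum_unique]
    rw [hparts, Finset.prod_singleton, blockVar_eq_idx]
    have hnp : ¬ hasPosMin ({(0 : ℤ)} : Finset ℤ) := by
      rintro ⟨m, hm, hm0, -⟩
      rw [Finset.mem_singleton] at hm
      omega
    rw [idx_of_not_hasPosMin hnp]
    have : posCount ({(0 : ℤ)} : Finset ℤ) = 0 := by
      unfold posCount
      rw [Finset.filter_singleton, if_neg (by omega)]
      rfl
    rw [this]
  · -- the recurrence
    intro n
    classical
    have hbij : Function.Bijective (EMap n) := ⟨EMap_injective n, EMap_surjective n⟩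
    simp only [aPoly]
    rw [finsum_eq_sum_of_fintype, finsum_eq_sum_of_fintype,
      ← Function.Bijective.sum_comp hbij (fun σ => ∏ β ∈ σ.val.parts, blockVar β),
      ← Finset.univ_sigma_univ, Finset.sum_sigma, map_sum, Finset.mul_sum,
      ← Finset.sum_add_distrib]
    refine Finset.sum_congr rfl fun π _ => ?_
    obtain ⟨π, hB⟩ := π
    rw [Fintype.sum_option]
    have e1 : ∏ β ∈ (EMap n ⟨⟨π, hB⟩, none⟩).val.parts, blockVar β
        = X 0 ^ 2 * ∏ γ ∈ π.parts, blockVar γ := weight_newPartition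
    have e2 : ∀ b : {β // β ∈ π.parts},
        ∏ δ ∈ (EMap n ⟨⟨π, hB⟩, some b⟩).val.parts, blockVar δ
          = (∏ γ ∈ π.parts.erase b.val, blockVar γ) * X (idx b.val + 1) := by
      rintro ⟨β, hβ⟩
      exact weight_insPartition hB hβ
    rw [e1]
    simp only [e2]
    rw [Finset.sum_coe_sort π.parts
      (fun β => (∏ γ ∈ π.parts.erase β, blockVar γ) * X (idx β + 1)),
      D_finset_prod D π.parts blockVar,
      Finset.sum_congr rfl (fun β _ => by rw [blockVar_eq_idx, hD] :
        ∀ β ∈ π.parts, (∏ γ ∈ π.parts.erase β, blockVar γ) * D (blockVar β)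
          = (∏ γ ∈ π.parts.erase β, blockVar γ) * X (idx β + 1))]
    exact add_comm _ _
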